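/- Let q ∈ ℝ with q > 0, q ≠ 1, and assume q^j ≠ 1 for 1 ≤ j ≤ n. For all functions f, g : ℝ → ℝ and every real x ≠ 0, the n-th iterated Jackson q-derivative of the product satisfies the q-Leibniz rule (D_q^n (f·g))(x) = Σ_{k=0}^n [n choose k]_q (D_q^k f)(q^{n−k} x) · (D_q^{n−k} g)(x). -/

import Mathlib

/-- The Jackson q-derivative `(D_q f)(x) = (f(qx) − f(x))/((q−1)x)`. -/
noncomputable def jackson (q : ℝ) (f : ℝ → ℝ) : ℝ → ℝ :=
  fun x => (f (q * x) - f x) / ((q - 1) * x)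

/-- The q-binomial coefficient
`[n choose m]_q = ((q^n−1)⋯(q^{n−m+1}−1))/((q^m−1)⋯(q−1))`, with `[n choose 0]_q = 1`. -/
noncomputable def qBinom (q : ℝ) (n m : ℕ) : ℝ :=
  ∏ i ∈ Finset.range m, (q ^ (n - i) - 1) / (q ^ (i + 1) - 1)

open Finset

lemma qBinom_quot (q : ℝ) (n m : ℕ) :
    qBinom q n m = (∏ i ∈ range m, (q ^ (n - i) - 1)) / (∏ i ∈ range m, (q ^ (i + 1) - 1)) := by
  rw [qBinom, Finset.prod_div_distrib]

lemma qBinom_zero (q : ℝ) (n : ℕ) : qBinom q n 0 = 1 := by simp [qBinom]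

lemma qBinom_self_succ (q : ℝ) (n : ℕ) : qBinom q n (n + 1) = 0 := by
  apply Finset.prod_eq_zero (Finset.self_mem_range_succ n)
  simp

lemma qBinom_pascal (q : ℝ) (n k : ℕ) (hk : k ≤ n)
    (hq : ∀ j : ℕ, 1 ≤ j → j ≤ k + 1 → q ^ j ≠ 1) :
    qBinom q (n + 1) (k + 1) = qBinom q n (k + 1) + q ^ (n - k) * qBinom q n k := by
  have h1 : (∏ i ∈ range k, (q ^ (i + 1) - 1)) ≠ 0 := by
    refine Finset.prod_ne_zero_iff.mpr fun i hi => sub_ne_zero.mpr ?_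
    exact hq (i + 1) (by omega) (by simp only [mem_range] at hi; omega)
  have h2 : (q ^ (k + 1) - 1) ≠ 0 := sub_ne_zero.mpr (hq (k + 1) (by omega) le_rfl)
  have hnum1 : ∏ i ∈ range (k + 1), (q ^ (n + 1 - i) - 1)
      = (q ^ (n + 1) - 1) * ∏ i ∈ range k, (q ^ (n - i) - 1) := by
    rw [Finset.prod_range_succ']
    simp only [Nat.succ_sub_succ, Nat.sub_zero]
    ring
  have hnum2 : ∏ i ∈ range (k + 1), (q ^ (n - i) - 1)
      = (∏ i ∈ range k, (q ^ (n - i) - 1)) * (q ^ (n - k) - 1) := Finset.prod_range_succ _ _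
  have hden : ∏ i ∈ range (k + 1), (q ^ (i + 1) - 1)
      = (∏ i ∈ range k, (q ^ (i + 1) - 1)) * (q ^ (k + 1) - 1) := Finset.prod_range_succ _ _
  rw [qBinom_quot, qBinom_quot, qBinom_quot, hnum1, hnum2, hden]
  have hpow : q ^ (n - k) * q ^ (k + 1) = q ^ (n + 1) := by
    rw [← pow_add]; congr 1; omega
  rw [show (q : ℝ) ^ (n + 1) - 1 = (q ^ (n - k) - 1) + q ^ (n - k) * (q ^ (k + 1) - 1) from by
    linear_combination -hpow]
  field_simp

lemma jackson_aux (q : ℝ) (hq0 : 0 < q) (hq1 : q ≠ 1) (f g : ℝ → ℝ) :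
    ∀ n : ℕ, (∀ j : ℕ, 1 ≤ j → j ≤ n → q ^ j ≠ 1) → ∀ x : ℝ, x ≠ 0 →
    (jackson q)^[n] (fun y => f y * g y) x =
      ∑ k ∈ Finset.range (n + 1),
        qBinom q n k * (jackson q)^[k] f (q ^ (n - k) * x) * (jackson q)^[n - k] g x := by
  intro n
  induction n with
  | zero => intro _ x hx; simp [qBinom]
  | succ n ih =>
    intro hqn x hx
    have hq' : q ≠ 0 := ne_of_gt hq0
    have ih' := ih (fun j h1 h2 => hqn j h1 (h2.trans (Nat.le_succ n)))
    have hqx : q * x ≠ 0 := mul_ne_zero hq' hx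
    rw [Function.iterate_succ_apply']
    show ((jackson q)^[n] (fun y => f y * g y) (q * x)
        - (jackson q)^[n] (fun y => f y * g y) x) / ((q - 1) * x) = _
    rw [ih' (q * x) hqx, ih' x hx, ← Finset.sum_sub_distrib, Finset.sum_div]
    -- per-term transformation
    have key : ∀ k ∈ range (n + 1),
        (qBinom q n k * (jackson q)^[k] f (q ^ (n - k) * (q * x)) * (jackson q)^[n - k] g (q * x)
          - qBinom q n k * (jackson q)^[k] f (q ^ (n - k) * x) * (jackson q)^[n - k] g x)
          / ((q - 1) * x)
        = qBinom q n k * (jackson q)^[k] f (q ^ (n + 1 - k) * x) * (jackson q)^[n + 1 - k] g x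
          + q ^ (n - k) * qBinom q n k * (jackson q)^[k + 1] f (q ^ (n - k) * x)
            * (jackson q)^[n - k] g x := by
      intro k hk
      have hkn : k ≤ n := by simp only [mem_range] at hk; omega
      have hpt : q ^ (n - k) * (q * x) = q ^ (n + 1 - k) * x := by
        rw [show n + 1 - k = (n - k) + 1 from by omega, pow_succ]; ring
      have hG : (jackson q)^[n + 1 - k] g x
          = ((jackson q)^[n - k] g (q * x) - (jackson q)^[n - k] g x) / ((q - 1) * x) := by
        rw [show n + 1 - k = (n - k) + 1 from by omega, Function.iterate_succ_apply']
        rfl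
      have hF : (jackson q)^[k + 1] f (q ^ (n - k) * x)
          = ((jackson q)^[k] f (q ^ (n + 1 - k) * x) - (jackson q)^[k] f (q ^ (n - k) * x))
            / ((q - 1) * (q ^ (n - k) * x)) := by
        rw [Function.iterate_succ_apply']
        show ((jackson q)^[k] f (q * (q ^ (n - k) * x)) - _) / _ = _
        rw [show q * (q ^ (n - k) * x) = q ^ (n + 1 - k) * x from by
          rw [show n + 1 - k = (n - k) + 1 from by omega, pow_succ]; ring]
      rw [hpt, hG, hF]
      have hq1' : q - 1 ≠ 0 := sub_ne_zero.mpr hq1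
      have hpow : (q : ℝ) ^ (n - k) ≠ 0 := pow_ne_zero _ hq'
      field_simp
      ring
    rw [Finset.sum_congr rfl key]
    -- now rework the RHS (the target sum)
    have hT : ∑ k ∈ Finset.range (n + 2),
        qBinom q (n + 1) k * (jackson q)^[k] f (q ^ (n + 1 - k) * x) * (jackson q)^[n + 1 - k] g x
        = (∑ k ∈ Finset.range (n + 1),
            qBinom q (n + 1) (k + 1) * (jackson q)^[k + 1] f (q ^ (n - k) * x)
              * (jackson q)^[n - k] g x)
          + qBinom q n 0 * (jackson q)^[0] f (q ^ (n + 1) * x) * (jackson q)^[n + 1] g x := by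
    -- sum_range_succ' peels off the k = 0 term
      rw [Finset.sum_range_succ']
      simp only [Nat.succ_sub_succ, Nat.sub_zero, qBinom_zero]
    rw [hT]
    have hpascal : ∀ k ∈ range (n + 1),
        qBinom q (n + 1) (k + 1) * (jackson q)^[k + 1] f (q ^ (n - k) * x)
          * (jackson q)^[n - k] g x
        = qBinom q n (k + 1) * (jackson q)^[k + 1] f (q ^ (n - k) * x) * (jackson q)^[n - k] g x
          + q ^ (n - k) * qBinom q n k * (jackson q)^[k + 1] f (q ^ (n - k) * x)
            * (jackson q)^[n - k] g x := by
      intro k hk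
      have hkn : k ≤ n := by simp only [mem_range] at hk; omega
      rw [qBinom_pascal q n k hkn (fun j h1 h2 => hqn j h1 (by omega))]
      ring
    rw [Finset.sum_congr rfl hpascal, Finset.sum_add_distrib, Finset.sum_add_distrib]
    -- remaining: ∑ S1 k = ∑ (shifted S1) + S1 0
    have hS1 : ∑ k ∈ Finset.range (n + 2),
        qBinom q n k * (jackson q)^[k] f (q ^ (n + 1 - k) * x) * (jackson q)^[n + 1 - k] g x
        = (∑ k ∈ Finset.range (n + 1),
            qBinom q n (k + 1) * (jackson q)^[k + 1] f (q ^ (n - k) * x)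
              * (jackson q)^[n - k] g x)
          + qBinom q n 0 * (jackson q)^[0] f (q ^ (n + 1) * x) * (jackson q)^[n + 1] g x := by
      rw [Finset.sum_range_succ']
      simp only [Nat.succ_sub_succ, Nat.sub_zero]
    have hS1' : ∑ k ∈ Finset.range (n + 2),
        qBinom q n k * (jackson q)^[k] f (q ^ (n + 1 - k) * x) * (jackson q)^[n + 1 - k] g x
        = ∑ k ∈ Finset.range (n + 1),
            qBinom q n k * (jackson q)^[k] f (q ^ (n + 1 - k) * x) * (jackson q)^[n + 1 - k] g x := by
      rw [Finset.sum_range_succ, qBinom_self_succ]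
      ring
    have hfin := hS1'.symm.trans hS1
    linear_combination hfin

/-- The q-Leibniz rule for the n-th iterated Jackson q-derivative of a product:
`(D_q^n (f·g))(x) = Σ_{k=0}^n [n choose k]_q (D_q^k f)(q^{n−k} x)·(D_q^{n−k} g)(x)`. -/
theorem jackson_iter_leibniz (q : ℝ) (n : ℕ) (hq0 : 0 < q) (hq1 : q ≠ 1)
    (hqn : ∀ j : ℕ, 1 ≤ j → j ≤ n → q ^ j ≠ 1) (f g : ℝ → ℝ) (x : ℝ) (hx : x ≠ 0) :
    (jackson q)^[n] (fun y => f y * g y) x =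
      ∑ k ∈ Finset.range (n + 1),
        qBinom q n k * (jackson q)^[k] f (q ^ (n - k) * x) * (jackson q)^[n - k] g x := by
  exact jackson_aux q hq0 hq1 f g n hqn x hx
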